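/- Let u₁, u₂ be unit vectors in ℝ² with u₁ ≠ ±u₂ and angle θ = ∠(u₁,u₂), and v₁, v₂ unit vectors with v₁ ≠ ±v₂ and angle θ'. Let g ∈ GL_2(ℝ) be the unique linear map sending u₁ ↦ v₁ and u₂ ↦ v₂. Then the singular values of g are sin(θ'/2)/sin(θ/2) and cos(θ'/2)/cos(θ/2). -/

import Mathlib

open InnerProductGeometry
open RealInnerProductSpace

private lemma aux_norm_sq (α β : ℝ) (p q : EuclideanSpace ℝ (Fin 2))
    (h : ⟪p, q⟫ = 0) :
    ‖α • p + β • q‖ ^ 2 = α ^ 2 * ‖p‖ ^ 2 + β ^ 2 * ‖q‖ ^ 2 := by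
  rw [norm_add_sq_real, real_inner_smul_left, real_inner_smul_right, h, norm_smul, norm_smul]
  simp [mul_pow, sq_abs]

private lemma aux_opNorm_eq_max (p q : EuclideanSpace ℝ (Fin 2)) (hp : p ≠ 0) (hq : q ≠ 0)
    (hpq : ⟪p, q⟫ = 0)
    (g : EuclideanSpace ℝ (Fin 2) ≃L[ℝ] EuclideanSpace ℝ (Fin 2))
    (hgpq : ⟪g p, g q⟫ = 0) :
    ‖(g : EuclideanSpace ℝ (Fin 2) →L[ℝ] EuclideanSpace ℝ (Fin 2))‖ =
      max (‖g p‖ / ‖p‖) (‖g q‖ / ‖q‖) := by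
  have hp' : (0:ℝ) < ‖p‖ := norm_pos_iff.mpr hp
  have hq' : (0:ℝ) < ‖q‖ := norm_pos_iff.mpr hq
  set a := ‖g p‖ / ‖p‖ with ha
  set b := ‖g q‖ / ‖q‖ with hb
  have hM : (0:ℝ) ≤ max a b := le_max_of_le_left (by positivity)
  -- linear independence and spanning
  have hli : LinearIndependent ℝ ![p, q] := by
    rw [LinearIndependent.pair_iff]
    intro s t hst
    constructor
    · have h1 : ⟪p, s • p + t • q⟫ = s * ‖p‖ ^ 2 := by
        rw [inner_add_right, real_inner_smul_right, real_inner_smul_right, hpq,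
          real_inner_self_eq_norm_sq]; ring
      rw [hst, inner_zero_right] at h1
      exact (mul_eq_zero.mp h1.symm).resolve_right (by positivity)
    · have h1 : ⟪q, s • p + t • q⟫ = t * ‖q‖ ^ 2 := by
        rw [inner_add_right, real_inner_smul_right, real_inner_smul_right,
          real_inner_comm p q, hpq, real_inner_self_eq_norm_sq]; ring
      rw [hst, inner_zero_right] at h1
      exact (mul_eq_zero.mp h1.symm).resolve_right (by positivity)
  have hspan : Submodule.span ℝ (Set.range ![p, q]) = ⊤ := by
    apply Submodule.eq_top_of_finrank_eq
    rw [finrank_span_eq_card hli]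
    simp [finrank_euclideanSpace]
  apply le_antisymm
  · apply ContinuousLinearMap.opNorm_le_bound _ hM
    intro x
    have hx : x ∈ Submodule.span ℝ (Set.range ![p, q]) := hspan ▸ Submodule.mem_top
    rw [Submodule.mem_span_range_iff_exists_fun] at hx
    obtain ⟨c, hc⟩ := hx
    rw [Fin.sum_univ_two] at hc
    simp only [Matrix.cons_val_zero, Matrix.cons_val_one, Matrix.head_cons] at hc
    set α := c 0
    set β := c 1
    have hgx : g x = α • g p + β • g q := by
      rw [← hc]; simp
    have h1 : ‖g x‖ ^ 2 = α ^ 2 * ‖g p‖ ^ 2 + β ^ 2 * ‖g q‖ ^ 2 := by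
      rw [hgx]; exact aux_norm_sq _ _ _ _ hgpq
    have h2 : ‖x‖ ^ 2 = α ^ 2 * ‖p‖ ^ 2 + β ^ 2 * ‖q‖ ^ 2 := by
      rw [← hc]; exact aux_norm_sq _ _ _ _ hpq
    have hgp : ‖g p‖ = a * ‖p‖ := by rw [ha, div_mul_cancel₀ _ hp'.ne']
    have hgq : ‖g q‖ = b * ‖q‖ := by rw [hb, div_mul_cancel₀ _ hq'.ne']
    have hle : ‖g x‖ ^ 2 ≤ (max a b * ‖x‖) ^ 2 := by
      have h3 : a ≤ max a b := le_max_left _ _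
      have h4 : b ≤ max a b := le_max_right _ _
      have ha0 : 0 ≤ a := by positivity
      have hb0 : 0 ≤ b := by positivity
      rw [h1, hgp, hgq]
      simp only [mul_pow]
      nlinarith [sq_nonneg α, sq_nonneg β, sq_nonneg (α * ‖p‖), sq_nonneg (β * ‖q‖),
        mul_le_mul h3 h3 ha0 hM, mul_le_mul h4 h4 hb0 hM, h2, norm_nonneg x]
    have h5 := Real.sqrt_le_sqrt hle
    rwa [Real.sqrt_sq (norm_nonneg _), Real.sqrt_sq (by positivity)] at h5
  · apply max_le
    · rw [ha, div_le_iff₀ hp']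
      exact (g : EuclideanSpace ℝ (Fin 2) →L[ℝ] EuclideanSpace ℝ (Fin 2)).le_opNorm p
    · rw [hb, div_le_iff₀ hq']
      exact (g : EuclideanSpace ℝ (Fin 2) →L[ℝ] EuclideanSpace ℝ (Fin 2)).le_opNorm q

private lemma aux_norm_add (u₁ u₂ : EuclideanSpace ℝ (Fin 2)) (h1 : ‖u₁‖ = 1) (h2 : ‖u₂‖ = 1) :
    ‖u₁ + u₂‖ = 2 * Real.cos (angle u₁ u₂ / 2) := by
  have hi : ⟪u₁, u₂⟫ = Real.cos (angle u₁ u₂) := by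
    rw [cos_angle, h1, h2]; simp
  have hθ1 := angle_nonneg u₁ u₂
  have hθ2 := angle_le_pi u₁ u₂
  have hpi := Real.pi_pos
  have hc : 0 ≤ Real.cos (angle u₁ u₂ / 2) :=
    Real.cos_nonneg_of_mem_Icc ⟨by linarith, by linarith⟩
  have hsq : ‖u₁ + u₂‖ ^ 2 = (2 * Real.cos (angle u₁ u₂ / 2)) ^ 2 := by
    rw [norm_add_sq_real, h1, h2, hi]
    have h3 := Real.cos_sq (angle u₁ u₂ / 2)
    rw [show 2 * (angle u₁ u₂ / 2) = angle u₁ u₂ by ring] at h3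
    nlinarith
  calc ‖u₁ + u₂‖ = Real.sqrt (‖u₁ + u₂‖ ^ 2) := (Real.sqrt_sq (norm_nonneg _)).symm
    _ = Real.sqrt ((2 * Real.cos (angle u₁ u₂ / 2)) ^ 2) := by rw [hsq]
    _ = _ := Real.sqrt_sq (by linarith)

private lemma aux_norm_sub (u₁ u₂ : EuclideanSpace ℝ (Fin 2)) (h1 : ‖u₁‖ = 1) (h2 : ‖u₂‖ = 1) :
    ‖u₁ - u₂‖ = 2 * Real.sin (angle u₁ u₂ / 2) := by
  have hi : ⟪u₁, u₂⟫ = Real.cos (angle u₁ u₂) := by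
    rw [cos_angle, h1, h2]; simp
  have hθ1 := angle_nonneg u₁ u₂
  have hθ2 := angle_le_pi u₁ u₂
  have hpi := Real.pi_pos
  have hs : 0 ≤ Real.sin (angle u₁ u₂ / 2) :=
    Real.sin_nonneg_of_nonneg_of_le_pi (by linarith) (by linarith)
  have hsq : ‖u₁ - u₂‖ ^ 2 = (2 * Real.sin (angle u₁ u₂ / 2)) ^ 2 := by
    rw [norm_sub_sq_real, h1, h2, hi]
    have h3 := Real.cos_sq (angle u₁ u₂ / 2)
    rw [show 2 * (angle u₁ u₂ / 2) = angle u₁ u₂ by ring] at h3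
    have h4 := Real.sin_sq_add_cos_sq (angle u₁ u₂ / 2)
    nlinarith
  calc ‖u₁ - u₂‖ = Real.sqrt (‖u₁ - u₂‖ ^ 2) := (Real.sqrt_sq (norm_nonneg _)).symm
    _ = Real.sqrt ((2 * Real.sin (angle u₁ u₂ / 2)) ^ 2) := by rw [hsq]
    _ = _ := Real.sqrt_sq (by linarith)

private lemma aux_angle_pos (u₁ u₂ : EuclideanSpace ℝ (Fin 2)) (h1 : ‖u₁‖ = 1) (h2 : ‖u₂‖ = 1)
    (hne : u₁ ≠ u₂) : 0 < angle u₁ u₂ := by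
  rcases (angle_nonneg u₁ u₂).lt_or_eq with h | h
  · exact h
  · exfalso
    obtain ⟨-, r, hr, hru⟩ := angle_eq_zero_iff.mp h.symm
    have hn : ‖u₂‖ = r * ‖u₁‖ := by rw [hru, norm_smul, Real.norm_of_nonneg hr.le]
    rw [h1, h2, mul_one] at hn
    rw [← hn, one_smul] at hru
    exact hne hru.symm

private lemma aux_angle_lt_pi (u₁ u₂ : EuclideanSpace ℝ (Fin 2)) (h1 : ‖u₁‖ = 1)
    (h2 : ‖u₂‖ = 1) (hne : u₁ ≠ -u₂) : angle u₁ u₂ < Real.pi := by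
  rcases (angle_le_pi u₁ u₂).lt_or_eq with h | h
  · exact h
  · exfalso
    obtain ⟨-, r, hr, hru⟩ := angle_eq_pi_iff.mp h
    have hn : ‖u₂‖ = -r * ‖u₁‖ := by
      rw [hru, norm_smul, Real.norm_of_nonpos hr.le]
    rw [h1, h2, mul_one] at hn
    have : r = -1 := by linarith
    rw [this] at hru
    apply hne
    rw [hru]; simp

private lemma aux_inv_max_inv {x y : ℝ} (hx : 0 < x) (hy : 0 < y) :
    (max x⁻¹ y⁻¹)⁻¹ = min x y := by
  rcases le_total x y with h | h
  · rw [min_eq_left h, max_eq_left (inv_anti₀ hx h), inv_inv]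
  · rw [min_eq_right h, max_eq_right (inv_anti₀ hy h), inv_inv]

/-- If `g` maps unit vectors `u₁ ↦ v₁`, `u₂ ↦ v₂` (with `u₁ ≠ ±u₂`, `v₁ ≠ ±v₂`),
`θ = ∠(u₁,u₂)` and `θ' = ∠(v₁,v₂)`, then the singular values of `g` are
`sin(θ'/2)/sin(θ/2)` and `cos(θ'/2)/cos(θ/2)`; equivalently, `‖g‖` is the larger and
`‖g⁻¹‖⁻¹` the smaller of these two quantities. -/
theorem singular_values_of_rhombus_map
    (u₁ u₂ v₁ v₂ : EuclideanSpace ℝ (Fin 2))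
    (hu₁ : ‖u₁‖ = 1) (hu₂ : ‖u₂‖ = 1) (hv₁ : ‖v₁‖ = 1) (hv₂ : ‖v₂‖ = 1)
    (hu : u₁ ≠ u₂ ∧ u₁ ≠ -u₂) (hv : v₁ ≠ v₂ ∧ v₁ ≠ -v₂)
    (g : EuclideanSpace ℝ (Fin 2) ≃L[ℝ] EuclideanSpace ℝ (Fin 2))
    (hg₁ : g u₁ = v₁) (hg₂ : g u₂ = v₂) :
    ‖(g : EuclideanSpace ℝ (Fin 2) →L[ℝ] EuclideanSpace ℝ (Fin 2))‖ =
        max (Real.sin (angle v₁ v₂ / 2) / Real.sin (angle u₁ u₂ / 2))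
          (Real.cos (angle v₁ v₂ / 2) / Real.cos (angle u₁ u₂ / 2)) ∧
      ‖(g.symm : EuclideanSpace ℝ (Fin 2) →L[ℝ] EuclideanSpace ℝ (Fin 2))‖⁻¹ =
        min (Real.sin (angle v₁ v₂ / 2) / Real.sin (angle u₁ u₂ / 2))
          (Real.cos (angle v₁ v₂ / 2) / Real.cos (angle u₁ u₂ / 2)) := by
  have hpi := Real.pi_pos
  have hθ0 := aux_angle_pos u₁ u₂ hu₁ hu₂ hu.1
  have hθπ := aux_angle_lt_pi u₁ u₂ hu₁ hu₂ hu.2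
  have hθ'0 := aux_angle_pos v₁ v₂ hv₁ hv₂ hv.1
  have hθ'π := aux_angle_lt_pi v₁ v₂ hv₁ hv₂ hv.2
  have hcθ : 0 < Real.cos (angle u₁ u₂ / 2) :=
    Real.cos_pos_of_mem_Ioo ⟨by linarith, by linarith⟩
  have hsθ : 0 < Real.sin (angle u₁ u₂ / 2) :=
    Real.sin_pos_of_pos_of_lt_pi (by linarith) (by linarith)
  have hcθ' : 0 < Real.cos (angle v₁ v₂ / 2) :=
    Real.cos_pos_of_mem_Ioo ⟨by linarith, by linarith⟩
  have hsθ' : 0 < Real.sin (angle v₁ v₂ / 2) :=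
    Real.sin_pos_of_pos_of_lt_pi (by linarith) (by linarith)
  -- the vectors
  have hp : u₁ + u₂ ≠ 0 := by
    intro h
    exact hu.2 (eq_neg_of_add_eq_zero_left h)
  have hq : u₁ - u₂ ≠ 0 := sub_ne_zero.mpr hu.1
  have hp' : v₁ + v₂ ≠ 0 := by
    intro h
    exact hv.2 (eq_neg_of_add_eq_zero_left h)
  have hq' : v₁ - v₂ ≠ 0 := sub_ne_zero.mpr hv.1
  have hinner : ∀ w₁ w₂ : EuclideanSpace ℝ (Fin 2), ‖w₁‖ = 1 → ‖w₂‖ = 1 →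
      ⟪w₁ + w₂, w₁ - w₂⟫ = 0 := by
    intro w₁ w₂ h1 h2
    have : ⟪w₁ + w₂, w₁ - w₂⟫ = ‖w₁‖ ^ 2 - ‖w₂‖ ^ 2 := by
      rw [inner_sub_right, inner_add_left, inner_add_left,
        real_inner_self_eq_norm_sq, real_inner_self_eq_norm_sq, real_inner_comm w₂ w₁]
      ring
    rw [this, h1, h2]; ring
  have hpq := hinner u₁ u₂ hu₁ hu₂
  have hvpq := hinner v₁ v₂ hv₁ hv₂
  have hgp : g (u₁ + u₂) = v₁ + v₂ := by rw [map_add, hg₁, hg₂]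
  have hgq : g (u₁ - u₂) = v₁ - v₂ := by rw [map_sub, hg₁, hg₂]
  have hgsp : g.symm (v₁ + v₂) = u₁ + u₂ := by
    rw [← hgp]; exact g.symm_apply_apply _
  have hgsq : g.symm (v₁ - v₂) = u₁ - u₂ := by
    rw [← hgq]; exact g.symm_apply_apply _
  -- norms
  have hnp := aux_norm_add u₁ u₂ hu₁ hu₂
  have hnq := aux_norm_sub u₁ u₂ hu₁ hu₂
  have hnp' := aux_norm_add v₁ v₂ hv₁ hv₂
  have hnq' := aux_norm_sub v₁ v₂ hv₁ hv₂
  constructor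
  · have h := aux_opNorm_eq_max (u₁ + u₂) (u₁ - u₂) hp hq hpq g (by rw [hgp, hgq]; exact hvpq)
    rw [h, hgp, hgq, hnp, hnq, hnp', hnq']
    rw [mul_div_mul_left _ _ (two_ne_zero), mul_div_mul_left _ _ (two_ne_zero), max_comm]
  · have h := aux_opNorm_eq_max (v₁ + v₂) (v₁ - v₂) hp' hq' hvpq g.symm
      (by rw [hgsp, hgsq]; exact hpq)
    rw [h, hgsp, hgsq, hnp, hnq, hnp', hnq']
    rw [mul_div_mul_left _ _ (two_ne_zero), mul_div_mul_left _ _ (two_ne_zero)]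
    rw [show Real.cos (angle u₁ u₂ / 2) / Real.cos (angle v₁ v₂ / 2) =
        (Real.cos (angle v₁ v₂ / 2) / Real.cos (angle u₁ u₂ / 2))⁻¹ by
      rw [inv_div]]
    rw [show Real.sin (angle u₁ u₂ / 2) / Real.sin (angle v₁ v₂ / 2) =
        (Real.sin (angle v₁ v₂ / 2) / Real.sin (angle u₁ u₂ / 2))⁻¹ by
      rw [inv_div]]
    rw [max_comm, aux_inv_max_inv (by positivity) (by positivity)]
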